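/- Let M be a strongly regular method of subdivision for k-simplices in ℝ^d. Then for every k-simplex σ and every n ≥ 1: Σ_{w∈M_n(σ)} diam(w)^k ≤ ‖M‖·diam(σ)^k, and for every γ > k, Σ_{w∈M_n(σ)} diam(w)^γ ≤ c_M^{n(γ-k)}·‖M‖·diam(σ)^γ. In particular, (M_n(σ))_{n≥1} is a regular sequence of subdivisions of σ. -/

import Mathlib

open MeasureTheory Metric Filter
open scoped ENNReal Topology

noncomputable section

abbrev Euc (d : ℕ) : Type := EuclideanSpace ℝ (Fin d)

namespace RoughForms

variable {d k : ℕ}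

/-- The (solid) simplex spanned by the tuple of vertices `v`. -/
def simplexSet (v : Fin (k+1) → Euc d) : Set (Euc d) := convexHull ℝ (Set.range v)

/-- The tuple obtained by omitting the `i`-th vertex. -/
def omitVertex {n : ℕ} (v : Fin (n+1) → Euc d) (i : Fin (n+1)) : Fin n → Euc d :=
  fun j => v (i.succAbove j)

/-- The boundary face of the simplex `v` opposite to the vertex `i`. -/
def faceSet (v : Fin (k+1) → Euc d) (i : Fin (k+1)) : Set (Euc d) :=
  convexHull ℝ (Set.range (omitVertex v i))

/-- The height over the boundary face opposite to vertex `i`: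
`sup_{x ∈ σ} dist(x, ⟨F⟩)`. -/
def hFace (v : Fin (k+1) → Euc d) (i : Fin (k+1)) : ℝ :=
  sSup ((fun x => Metric.infDist x
    ((affineSpan ℝ (Set.range (omitVertex v i)) : AffineSubspace ℝ (Euc d)) : Set (Euc d)))
      '' simplexSet v)

/-- `h_σ`: the minimal height over the boundary faces. -/
def hSimplex (v : Fin (k+1) → Euc d) : ℝ := ⨅ i : Fin (k+1), hFace v i

/-- `mass_α^k(σ) = max_F Vol^{k-1}(F) · h_σ^α`. -/
def mass (α : ℝ) (v : Fin (k+1) → Euc d) : ℝ :=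
  ⨆ i : Fin (k+1), (μH[((k : ℝ) - 1)] (faceSet v i)).toReal * hSimplex v ^ α

/-- diameter of the simplex spanned by `v`. -/
def sdiam (v : Fin (k+1) → Euc d) : ℝ := Metric.diam (simplexSet v)

/-- `w` is positively oriented relative to `v`: the matrix of barycentric
coordinates of the vertices of `w` with respect to the vertices of `v`
has positive determinant. -/
def PosOriented (v w : Fin (k+1) → Euc d) : Prop :=
  ∃ M : Matrix (Fin (k+1)) (Fin (k+1)) ℝ,
    (∀ i, ∑ j, M i j = 1) ∧
    (∀ i, w i = (Finset.univ.affineCombination ℝ v) (M i)) ∧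
    0 < M.det

/-- `S` is a subdivision of the simplex `v`, with all pieces ordered positively
relative to `v`. -/
def IsSubdivision (v : Fin (k+1) → Euc d) (S : Finset (Fin (k+1) → Euc d)) : Prop :=
  (∀ w ∈ S, AffineIndependent ℝ w ∧ PosOriented v w) ∧
  (⋃ w ∈ (S : Set (Fin (k+1) → Euc d)), simplexSet w) = simplexSet v ∧
  (∀ w ∈ S, ∀ w' ∈ S, w ≠ w' → μH[(k : ℝ)] (simplexSet w ∩ simplexSet w') = 0)

/-- A `k`-cochain: an alternating, additive (over subdivisions) function on ordered
tuples of affinely independent points. -/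
structure IsCochain (A : (Fin (k+1) → Euc d) → ℝ) : Prop where
  alt : ∀ v : Fin (k+1) → Euc d, AffineIndependent ℝ v → ∀ π : Equiv.Perm (Fin (k+1)),
    A (v ∘ π) = ((Equiv.Perm.sign π : ℤ) : ℝ) * A v
  add : ∀ v : Fin (k+1) → Euc d, AffineIndependent ℝ v →
    ∀ S : Finset (Fin (k+1) → Euc d), IsSubdivision v S → A v = ∑ w ∈ S, A w

/-- The boundary of a `k`-cochain, as a function on `(k+2)`-tuples. -/
def bdry (A : (Fin (k+1) → Euc d) → ℝ) : (Fin (k+2) → Euc d) → ℝ :=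
  fun w => ∑ i : Fin (k+2), (-1 : ℝ) ^ (i : ℕ) * A (omitVertex w i)

/-- An alternating function on tuples. -/
def Alternating (Ξ : (Fin (k+1) → Euc d) → ℝ) : Prop :=
  ∀ v : Fin (k+1) → Euc d, AffineIndependent ℝ v → ∀ π : Equiv.Perm (Fin (k+1)),
    Ξ (v ∘ π) = ((Equiv.Perm.sign π : ℤ) : ℝ) * Ξ v

/-- `⟦Ξ⟧_η ≤ N`. -/
def XiBound (η N : ℝ) (Ξ : (Fin (k+1) → Euc d) → ℝ) : Prop :=
  ∀ v : Fin (k+1) → Euc d, AffineIndependent ℝ v → |Ξ v| ≤ N * sdiam v ^ η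

/-- `⟦δΞ⟧_γ ≤ N`. -/
def DeltaBound (γ N : ℝ) (Ξ : (Fin (k+1) → Euc d) → ℝ) : Prop :=
  ∀ v : Fin (k+1) → Euc d, AffineIndependent ℝ v →
    ∀ S : Finset (Fin (k+1) → Euc d), IsSubdivision v S →
      |Ξ v - ∑ w ∈ S, Ξ w| ≤ N * S.card * sdiam v ^ γ

/-- A regular sequence of subdivisions of the simplex `v`. -/
def RegularSeq (v : Fin (k+1) → Euc d) (S : ℕ → Finset (Fin (k+1) → Euc d)) : Prop :=
  (∀ n, IsSubdivision v (S n)) ∧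
  ∀ β : ℝ, (k : ℝ) < β →
    Tendsto (fun n => ∑ w ∈ S n, sdiam w ^ β) atTop (nhds 0)


/-- `k`-volume of the simplex spanned by `v`. -/
def svol (v : Fin (k+1) → Euc d) : ℝ := (μH[(k : ℝ)] (simplexSet v)).toReal

/-- Eccentricity `𝔢(σ) = diam(σ)^k / Vol^k(σ)`. -/
def ecc (v : Fin (k+1) → Euc d) : ℝ := sdiam v ^ (k : ℝ) / svol v

/-- A method of subdivision for `k`-simplices in `ℝ^d`: for every `ℓ ≥ 1` and every
`k`-simplex `σ` it produces a subdivision `M_ℓ(σ)` (pieces positively oriented relative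
to `σ`), compatibly: `M_{ℓ+ℓ'}(σ) = ⋃_{w ∈ M_{ℓ'}(σ)} M_ℓ(w)`. -/
structure Method (d k : ℕ) where
  pieces : ℕ → (Fin (k+1) → Euc d) → Finset (Fin (k+1) → Euc d)
  subdiv : ∀ ℓ, 1 ≤ ℓ → ∀ v : Fin (k+1) → Euc d, AffineIndependent ℝ v →
    IsSubdivision v (pieces ℓ v)
  semigroup : ∀ ℓ ℓ', 1 ≤ ℓ → 1 ≤ ℓ' → ∀ v : Fin (k+1) → Euc d, AffineIndependent ℝ v →
    ∀ u, u ∈ pieces (ℓ + ℓ') v ↔ ∃ w ∈ pieces ℓ' v, u ∈ pieces ℓ w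

/-- The conditions expressing that the method `M` is strongly regular, with explicit
witnesses: `N` bounds the cardinality of `M_1(σ)`, `K` bounds the eccentricity ratios
(`‖M‖ ≤ K`), `c < 1` bounds the diameter contraction (`c_M ≤ c`), and `cv·ℓ^μ` bounds
the volume ratios between pieces of `M_ℓ(σ)`. -/
structure StronglyRegularWith (M : Method d k) (N : ℕ) (K c cv μ : ℝ) : Prop where
  card_bound : ∀ v : Fin (k+1) → Euc d, AffineIndependent ℝ v → (M.pieces 1 v).card ≤ N
  ecc_bound : ∀ v : Fin (k+1) → Euc d, AffineIndependent ℝ v → ∀ ℓ, 1 ≤ ℓ →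
    ∀ w ∈ M.pieces ℓ v, ecc w ≤ K * ecc v
  c_nonneg : 0 ≤ c
  c_lt_one : c < 1
  diam_bound : ∀ v : Fin (k+1) → Euc d, AffineIndependent ℝ v →
    ∀ w ∈ M.pieces 1 v, sdiam w ≤ c * sdiam v
  cv_pos : 0 < cv
  μ_pos : 0 < μ
  vol_bound : ∀ v : Fin (k+1) → Euc d, AffineIndependent ℝ v → ∀ ℓ, 1 ≤ ℓ →
    ∀ w ∈ M.pieces ℓ v, ∀ w' ∈ M.pieces ℓ v, svol w' ≤ cv * (ℓ : ℝ) ^ μ * svol w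

/-- The maximal diameter of the simplices in the finite family `S`. -/
def Dmax (S : Finset (Fin (k+1) → Euc d)) : ℝ :=
  sSup ((fun w => sdiam w) '' (S : Set (Fin (k+1) → Euc d)))

/-- The pieces of `Kn` whose simplex is contained in the simplex of `w`. -/
def containedIn (Kn : Finset (Fin (k+1) → Euc d)) (w : Fin (k+1) → Euc d) :
    Finset (Fin (k+1) → Euc d) :=
  @Finset.filter _ (fun u => simplexSet u ⊆ simplexSet w) (Classical.decPred _) Kn

lemma isCompact_simplexSet' (v : Fin (k+1) → Euc d) : IsCompact (simplexSet v) :=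
  (Set.finite_range v).isCompact_convexHull ℝ

lemma measure_simplex_pos_lt_top (v : Fin (k+1) → Euc d) (hv : AffineIndependent ℝ v) :
    0 < μH[(k:ℝ)] (simplexSet v) ∧ μH[(k:ℝ)] (simplexSet v) < ⊤ := by
  classical
  set V := vectorSpan ℝ (Set.range v) with hVdef
  have hrank : Module.finrank ℝ V = k := hv.finrank_vectorSpan (by simp)
  set e : Euc d ≃ᵃⁱ[ℝ] Euc d := AffineIsometryEquiv.constVAdd ℝ (Euc d) (-(v 0)) with he
  have heapp : ∀ x, e x = -(v 0) + x := fun x => rfl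
  set t : Set (Euc d) := e '' simplexSet v with ht
  have htV : t ⊆ (V : Set (Euc d)) := by
    rintro x ⟨y, hy, rfl⟩
    have hy' : y ∈ (affineSpan ℝ (Set.range v) : Set (Euc d)) :=
      convexHull_subset_affineSpan _ hy
    have h0 : v 0 ∈ affineSpan ℝ (Set.range v) := mem_affineSpan ℝ ⟨0, rfl⟩
    have hmem := AffineSubspace.vsub_mem_direction hy' h0
    rw [direction_affineSpan] at hmem
    have : y -ᵥ v 0 = e y := by simp [heapp, sub_eq_neg_add]
    rwa [this] at hmem
  have hmemV : ∀ i, e (v i) ∈ V := by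
    intro i
    exact htV ⟨v i, subset_convexHull ℝ _ (Set.mem_range_self i), rfl⟩
  set p : Fin (k+1) → V := fun i => ⟨e (v i), hmemV i⟩ with hp
  have hvalp : (Subtype.val : V → Euc d) ∘ p = e ∘ v := rfl
  set s₀ : Set V := Subtype.val ⁻¹' t with hs₀
  have himg : Subtype.val '' s₀ = t := by
    rw [hs₀, Set.image_preimage_eq_of_subset]
    rw [Subtype.range_coe]; exact htV
  have hval : Isometry (Subtype.val : V → Euc d) := isometry_subtype_coe
  have hμ1 : μH[(k:ℝ)] (simplexSet v) = μH[(k:ℝ)] t := by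
    rw [ht, (e.isometry).hausdorffMeasure_image (Or.inl (by positivity))]
  have hμ2 : μH[(k:ℝ)] t = μH[(k:ℝ)] s₀ := by
    rw [← himg, hval.hausdorffMeasure_image (Or.inl (by positivity))]
  have hs₀hull : s₀ = convexHull ℝ (Set.range p) := by
    have h1 : Subtype.val '' (convexHull ℝ (Set.range p)) = t := by
      have h2 := AffineMap.image_convexHull V.subtype.toAffineMap (Set.range p)
      have h3 : (V.subtype.toAffineMap : V → Euc d) = Subtype.val := rfl
      rw [h3] at h2
      rw [h2]
      have h4 : Subtype.val '' Set.range p = Set.range (⇑e ∘ v) := by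
        rw [← Set.range_comp]; rfl
      rw [h4, Set.range_comp, ht, simplexSet]
      have h5 := AffineMap.image_convexHull e.toAffineEquiv.toAffineMap (Set.range v)
      have h6 : (e.toAffineEquiv.toAffineMap : Euc d → Euc d) = ⇑e := rfl
      rw [h6] at h5
      rw [← h5]
    calc s₀ = Subtype.val ⁻¹' (Subtype.val '' (convexHull ℝ (Set.range p))) := by rw [h1]
    _ = convexHull ℝ (Set.range p) := Set.preimage_image_eq _ Subtype.val_injective
  have htc : IsCompact t := (isCompact_simplexSet' v).image e.toHomeomorph.continuous
  haveI : CompleteSpace V := FiniteDimensional.complete ℝ V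
  have hemb := hval.isClosedEmbedding
  have hs₀c : IsCompact s₀ := hemb.isCompact_preimage htc
  have hpind : AffineIndependent ℝ p := by
    apply AffineIndependent.of_comp V.subtype.toAffineMap
    have : (V.subtype.toAffineMap : V → Euc d) ∘ p = e.toAffineEquiv.toAffineMap ∘ v := rfl
    rw [this]
    exact hv.map' _ e.toAffineEquiv.injective
  have htop : affineSpan ℝ (Set.range p) = ⊤ := by
    rw [hpind.affineSpan_eq_top_iff_card_eq_finrank_add_one]
    simp [hrank]
  have hint : (interior (convexHull ℝ (Set.range p))).Nonempty :=
    interior_convexHull_nonempty_iff_affineSpan_eq_top.mpr htop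
  have hcast : (μH[(k:ℝ)] : Measure V) = μH[(Module.finrank ℝ V : ℝ)] := by rw [hrank]
  rw [hμ1, hμ2, hcast]
  constructor
  · exact Measure.measure_pos_of_nonempty_interior _ (by rw [hs₀hull]; exact hint)
  · exact hs₀c.measure_lt_top

lemma svol_pos (v : Fin (k+1) → Euc d) (hv : AffineIndependent ℝ v) : 0 < svol v := by
  obtain ⟨h1, h2⟩ := measure_simplex_pos_lt_top v hv
  exact ENNReal.toReal_pos h1.ne' h2.ne

lemma svol_eq_sum {v : Fin (k+1) → Euc d} (hv : AffineIndependent ℝ v)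
    {S : Finset (Fin (k+1) → Euc d)} (hS : IsSubdivision v S) :
    svol v = ∑ w ∈ S, svol w := by
  classical
  have hμ : μH[(k:ℝ)] (simplexSet v) = ∑ w ∈ S, μH[(k:ℝ)] (simplexSet w) := by
    rw [← hS.2.1]
    exact measure_biUnion_finset₀
      (fun w hw w' hw' hne => hS.2.2 w hw w' hw' hne)
      (fun w _ => ((isCompact_simplexSet' w).isClosed.measurableSet).nullMeasurableSet)
  have hfin : ∀ w ∈ S, μH[(k:ℝ)] (simplexSet w) ≠ ⊤ := fun w hw =>
    (measure_simplex_pos_lt_top w (hS.1 w hw).1).2.ne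
  simp only [svol]
  rw [hμ, ENNReal.toReal_sum hfin]

/-- for a strongly regular method of subdivision `M` (with witnesses
`‖M‖ ≤ K`, `c_M ≤ c < 1`), every `k`-simplex `σ` and every `n ≥ 1`:
`Σ_{w∈M_n(σ)} diam(w)^k ≤ K·diam(σ)^k`; for every `γ > k`,
`Σ_{w∈M_n(σ)} diam(w)^γ ≤ c^{n(γ-k)}·K·diam(σ)^γ`; and `(M_n(σ))_n` is a regular
sequence of subdivisions of `σ`. -/
theorem stmt7 (d k : ℕ) (hk : 1 ≤ k) (hkd : k ≤ d)
    (M : Method d k) (N : ℕ) (K c cv μ : ℝ)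
    (hM : StronglyRegularWith M N K c cv μ)
    (v : Fin (k+1) → Euc d) (hv : AffineIndependent ℝ v) :
    (∀ n : ℕ, 1 ≤ n →
        ∑ w ∈ M.pieces n v, sdiam w ^ (k : ℝ) ≤ K * sdiam v ^ (k : ℝ)) ∧
    (∀ n : ℕ, 1 ≤ n → ∀ γ : ℝ, (k : ℝ) < γ →
        ∑ w ∈ M.pieces n v, sdiam w ^ γ
          ≤ c ^ ((n : ℝ) * (γ - (k : ℝ))) * K * sdiam v ^ γ) ∧
    (∀ β : ℝ, (k : ℝ) < β →
        Tendsto (fun n => ∑ w ∈ M.pieces n v, sdiam w ^ β) atTop (nhds 0)) := by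
  have hc0 := hM.c_nonneg
  have hdv : 0 ≤ sdiam v := Metric.diam_nonneg
  have hdiam : ∀ n : ℕ, 1 ≤ n → ∀ w ∈ M.pieces n v,
      AffineIndependent ℝ w ∧ sdiam w ≤ c ^ n * sdiam v := by
    intro n
    induction n with
    | zero => intro hn; omega
    | succ n ih =>
      intro _ w hw
      by_cases h0 : n = 0
      · subst h0
        have hs := M.subdiv 1 le_rfl v hv
        refine ⟨(hs.1 w hw).1, ?_⟩
        simpa [pow_one] using hM.diam_bound v hv w hw
      · have hn1 : 1 ≤ n := Nat.one_le_iff_ne_zero.mpr h0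
        have hmem : w ∈ M.pieces (1 + n) v := by rw [Nat.add_comm 1 n]; exact hw
        obtain ⟨u, hu, hwu⟩ := (M.semigroup 1 n le_rfl hn1 v hv w).mp hmem
        obtain ⟨huind, hudiam⟩ := ih hn1 u hu
        have hs := M.subdiv 1 le_rfl u huind
        refine ⟨(hs.1 w hwu).1, ?_⟩
        calc sdiam w ≤ c * sdiam u := hM.diam_bound u huind w hwu
        _ ≤ c * (c ^ n * sdiam v) := mul_le_mul_of_nonneg_left hudiam hc0
        _ = c ^ (n+1) * sdiam v := by ring
  have part1 : ∀ n : ℕ, 1 ≤ n →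
      ∑ w ∈ M.pieces n v, sdiam w ^ (k : ℝ) ≤ K * sdiam v ^ (k : ℝ) := by
    intro n hn
    have hsub := M.subdiv n hn v hv
    have hsum := svol_eq_sum hv hsub
    have hvpos : 0 < svol v := svol_pos v hv
    calc ∑ w ∈ M.pieces n v, sdiam w ^ (k:ℝ)
        = ∑ w ∈ M.pieces n v, ecc w * svol w := by
          refine Finset.sum_congr rfl fun w hw => ?_
          have hw0 : 0 < svol w := svol_pos w (hsub.1 w hw).1
          simp only [ecc]
          rw [div_mul_cancel₀ _ hw0.ne']
      _ ≤ ∑ w ∈ M.pieces n v, (K * ecc v) * svol w := by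
          refine Finset.sum_le_sum fun w hw => ?_
          exact mul_le_mul_of_nonneg_right (hM.ecc_bound v hv n hn w hw)
            (svol_pos w (hsub.1 w hw).1).le
      _ = (K * ecc v) * svol v := by rw [← Finset.mul_sum, ← hsum]
      _ = K * sdiam v ^ (k:ℝ) := by
          simp only [ecc]
          rw [mul_assoc, div_mul_cancel₀ _ hvpos.ne']
  have part2 : ∀ n : ℕ, 1 ≤ n → ∀ γ : ℝ, (k : ℝ) < γ →
      ∑ w ∈ M.pieces n v, sdiam w ^ γ
        ≤ c ^ ((n : ℝ) * (γ - (k : ℝ))) * K * sdiam v ^ γ := by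
    intro n hn γ hγ
    have hk0 : (0:ℝ) ≤ (k:ℝ) := Nat.cast_nonneg k
    have hγk : (0:ℝ) < γ - k := by linarith
    have key : ∀ w ∈ M.pieces n v,
        sdiam w ^ γ ≤ (c^n * sdiam v) ^ (γ - (k:ℝ)) * sdiam w ^ (k:ℝ) := by
      intro w hw
      have hdw : 0 ≤ sdiam w := Metric.diam_nonneg
      have hle := (hdiam n hn w hw).2
      have hsplit : sdiam w ^ γ = sdiam w ^ (γ - (k:ℝ)) * sdiam w ^ (k:ℝ) := by
        rw [← Real.rpow_add' hdw (by linarith)]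
        norm_num
      rw [hsplit]
      exact mul_le_mul_of_nonneg_right (Real.rpow_le_rpow hdw hle hγk.le)
        (Real.rpow_nonneg hdw _)
    calc ∑ w ∈ M.pieces n v, sdiam w ^ γ
        ≤ ∑ w ∈ M.pieces n v, (c^n * sdiam v) ^ (γ - (k:ℝ)) * sdiam w ^ (k:ℝ) :=
          Finset.sum_le_sum key
      _ = (c^n * sdiam v) ^ (γ-(k:ℝ)) * ∑ w ∈ M.pieces n v, sdiam w ^ (k:ℝ) := by
          rw [Finset.mul_sum]
      _ ≤ (c^n * sdiam v) ^ (γ-(k:ℝ)) * (K * sdiam v ^ (k:ℝ)) :=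
          mul_le_mul_of_nonneg_left (part1 n hn)
            (Real.rpow_nonneg (by positivity) _)
      _ = c ^ ((n:ℝ)*(γ-(k:ℝ))) * K * sdiam v ^ γ := by
          have e1 : (c^n * sdiam v) ^ (γ-(k:ℝ))
              = c ^ ((n:ℝ)*(γ-(k:ℝ))) * sdiam v ^ (γ-(k:ℝ)) := by
            rw [Real.mul_rpow (pow_nonneg hc0 n) hdv, ← Real.rpow_natCast c n,
              ← Real.rpow_mul hc0]
          have e2 : sdiam v ^ (γ-(k:ℝ)) * sdiam v ^ (k:ℝ) = sdiam v ^ γ := by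
            rw [← Real.rpow_add' hdv (by linarith)]
            norm_num
          rw [e1, show c ^ ((n:ℝ)*(γ-(k:ℝ))) * sdiam v ^ (γ-(k:ℝ)) * (K * sdiam v ^ (k:ℝ))
            = c ^ ((n:ℝ)*(γ-(k:ℝ))) * K * (sdiam v ^ (γ-(k:ℝ)) * sdiam v ^ (k:ℝ)) from by ring,
            e2]
  refine ⟨part1, part2, ?_⟩
  intro β hβ
  have hβk : (0:ℝ) < β - (k:ℝ) := by linarith
  set r := c ^ (β - (k:ℝ)) with hr
  have hr0 : 0 ≤ r := Real.rpow_nonneg hc0 _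
  have hr1 : r < 1 := Real.rpow_lt_one hc0 hM.c_lt_one hβk
  have hg : Tendsto (fun n : ℕ => r ^ n * (K * sdiam v ^ β)) atTop (nhds 0) := by
    simpa using (tendsto_pow_atTop_nhds_zero_of_lt_one hr0 hr1).mul_const (K * sdiam v ^ β)
  apply squeeze_zero' ?_ ?_ hg
  · exact Filter.Eventually.of_forall fun n =>
      Finset.sum_nonneg fun w _ => Real.rpow_nonneg Metric.diam_nonneg _
  · filter_upwards [eventually_ge_atTop 1] with n hn
    have h2 := part2 n hn β hβ
    have e3 : c ^ ((n:ℝ)*(β-(k:ℝ))) = r ^ n := by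
      rw [mul_comm, Real.rpow_mul hc0, Real.rpow_natCast]
    calc ∑ w ∈ M.pieces n v, sdiam w ^ β
        ≤ c ^ ((n:ℝ)*(β-(k:ℝ))) * K * sdiam v ^ β := h2
      _ = r ^ n * (K * sdiam v ^ β) := by rw [e3]; ring


end RoughForms
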